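/- Let k be a positive integer, t a positive real number, and z a complex number with |z| > 1. Then |z + t·z(z^k − 1)/(z^k + 1)| > |z|; in particular |z + t·z(z^k − 1)/(z^k + 1)| > 1. (Note that z^k + 1 ≠ 0 since |z| > 1.) -/

import Mathlib

theorem stmt0 (k : ℕ) (hk : 1 ≤ k) (t : ℝ) (ht : 0 < t) (z : ℂ)
    (hz : 1 < ‖z‖) :
    ‖z‖ < ‖z + (t : ℂ) * (z * (z ^ k - 1) / (z ^ k + 1))‖ ∧
    1 < ‖z + (t : ℂ) * (z * (z ^ k - 1) / (z ^ k + 1))‖ := by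
  have hw : 1 < ‖z ^ k‖ := by
    rw [norm_pow]; exact one_lt_pow₀ hz (by omega)
  have hden : z ^ k + 1 ≠ 0 := by
    intro h
    rw [add_eq_zero_iff_eq_neg] at h
    rw [h] at hw; simp at hw
  have hz0 : z ≠ 0 := by
    intro h; rw [h] at hz; simp at hz; linarith
  have key : z + (t : ℂ) * (z * (z ^ k - 1) / (z ^ k + 1))
      = z * ((1 + (t : ℂ)) * z ^ k + (1 - t)) / (z ^ k + 1) := by
    field_simp; ring
  have hsqnorm : 1 < (z ^ k).re ^ 2 + (z ^ k).im ^ 2 := by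
    have := one_lt_pow₀ hw (n := 2) (by norm_num)
    rwa [Complex.sq_norm, Complex.normSq_apply, ← pow_two, ← pow_two] at this
  have habs : ‖z ^ k + 1‖
      < ‖(1 + (t : ℂ)) * z ^ k + (1 - t)‖ := by
    apply lt_of_pow_lt_pow_left₀ 2 (norm_nonneg _)
    rw [Complex.sq_norm, Complex.sq_norm, Complex.normSq_apply, Complex.normSq_apply]
    simp only [Complex.add_re, Complex.add_im, Complex.mul_re, Complex.mul_im,
      Complex.one_re, Complex.one_im, Complex.sub_re, Complex.sub_im,
      Complex.ofReal_re, Complex.ofReal_im]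
    ring_nf
    nlinarith [sq_nonneg ((z ^ k).re - 1), sq_nonneg (z ^ k).im, sq_nonneg t, ht,
      mul_pos ht (sub_pos.mpr hsqnorm)]
  have hzpos : 0 < ‖z‖ := lt_trans one_pos hz
  have hdpos : 0 < ‖z ^ k + 1‖ := by
    simpa using (norm_pos_iff.mpr hden)
  have main : ‖z‖
      < ‖z + (t : ℂ) * (z * (z ^ k - 1) / (z ^ k + 1))‖ := by
    rw [key, norm_div, norm_mul, lt_div_iff₀ hdpos]
    exact mul_lt_mul_of_pos_left habs hzpos
  exact ⟨main, lt_trans hz main⟩
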